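/- Define k(x,y) = sum over i,j in {+1,-1} of ((1+i*x)*(1+j*y)/4) * log2(1 + ((1-i*x)*(1-j*y))/((1+i*x)*(1+j*y))) for x,y in (0,1). Then the fourth mixed partial derivative d^4 k / dx^2 dy^2 equals (2/ln 2)*(1 + 3*x^2*y^2)/(1 - x^2*y^2)^3, and this satisfies the bound (2/ln 2)*(1+3x^2y^2)/(1-x^2y^2)^3 <= (8/ln 2)*(1-x^2)^(-3/2)*(1-y^2)^(-3/2). -/

import Mathlib

/-- The GEXIT/entropy kernel
`k(x,y) = ∑_{i,j=±1} ((1+ix)(1+jy)/4) log₂(1 + ((1-ix)(1-jy))/((1+ix)(1+jy)))`. -/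
noncomputable def kker (x y : ℝ) : ℝ :=
    ((1+x)*(1+y)/4) * Real.logb 2 (1 + ((1-x)*(1-y))/((1+x)*(1+y)))
  + ((1+x)*(1-y)/4) * Real.logb 2 (1 + ((1-x)*(1+y))/((1+x)*(1-y)))
  + ((1-x)*(1+y)/4) * Real.logb 2 (1 + ((1+x)*(1-y))/((1-x)*(1+y)))
  + ((1-x)*(1-y)/4) * Real.logb 2 (1 + ((1+x)*(1+y))/((1-x)*(1-y)))

/-- binary-entropy-like function. -/
noncomputable def hbin (t : ℝ) : ℝ :=
  ((1+t)/2) * Real.logb 2 (1+t) + ((1-t)/2) * Real.logb 2 (1-t)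

noncomputable def hbin1 (t : ℝ) : ℝ :=
  (Real.log (1+t) - Real.log (1-t)) / (2 * Real.log 2)

noncomputable def hbin2 (t : ℝ) : ℝ := 1 / ((1 - t^2) * Real.log 2)

lemma log2_pos : (0:ℝ) < Real.log 2 := Real.log_pos (by norm_num)

lemma prod_mem_Ioo {a b : ℝ} (ha : a ∈ Set.Ioo (-1:ℝ) 1) (hb : b ∈ Set.Ioo (-1:ℝ) 1) :
    a * b ∈ Set.Ioo (-1:ℝ) 1 := by
  obtain ⟨ha1, ha2⟩ := ha
  obtain ⟨hb1, hb2⟩ := hb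
  constructor
  · nlinarith [mul_pos (by linarith : (0:ℝ) < 1 - a) (by linarith : (0:ℝ) < 1 - b),
      mul_pos (by linarith : (0:ℝ) < 1 + a) (by linarith : (0:ℝ) < 1 + b)]
  · nlinarith [mul_pos (by linarith : (0:ℝ) < 1 - a) (by linarith : (0:ℝ) < 1 + b),
      mul_pos (by linarith : (0:ℝ) < 1 + a) (by linarith : (0:ℝ) < 1 - b)]

lemma logb_aux {u q r p : ℝ} (hq : 0 < q) (hr : 0 < r) (hp : 0 < p)
    (h : q * r + u = 2 * p) :
    Real.logb 2 (1 + u / (q * r)) = 1 + Real.logb 2 p - Real.logb 2 q - Real.logb 2 r := by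
  have hqr : q * r ≠ 0 := by positivity
  have harg : 1 + u / (q * r) = (2 * p) / (q * r) := by
    field_simp
    linarith
  rw [harg, Real.logb_div (by positivity) hqr,
    Real.logb_mul (by norm_num) hp.ne', Real.logb_mul hq.ne' hr.ne',
    Real.logb_self_eq_one (by norm_num)]
  ring

lemma kker_eq {a b : ℝ} (ha : a ∈ Set.Ioo (-1:ℝ) 1) (hb : b ∈ Set.Ioo (-1:ℝ) 1) :
    kker a b = 1 + hbin (a*b) - hbin a - hbin b := by
  obtain ⟨ha1, ha2⟩ := ha
  obtain ⟨hb1, hb2⟩ := hb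
  have hab := prod_mem_Ioo ⟨ha1, ha2⟩ ⟨hb1, hb2⟩
  have h1a : (0:ℝ) < 1 + a := by linarith
  have h2a : (0:ℝ) < 1 - a := by linarith
  have h1b : (0:ℝ) < 1 + b := by linarith
  have h2b : (0:ℝ) < 1 - b := by linarith
  have h1ab : (0:ℝ) < 1 + a*b := by linarith [hab.1]
  have h2ab : (0:ℝ) < 1 - a*b := by linarith [hab.2]
  unfold kker hbin
  rw [logb_aux h1a h1b h1ab (by ring), logb_aux h1a h2b h2ab (by ring),
    logb_aux h2a h1b h2ab (by ring), logb_aux h2a h2b h1ab (by ring)]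
  ring

lemma hasDerivAt_hbin {t : ℝ} (ht : t ∈ Set.Ioo (-1:ℝ) 1) :
    HasDerivAt hbin (hbin1 t) t := by
  obtain ⟨ht1, ht2⟩ := ht
  have h1 : (0:ℝ) < 1 + t := by linarith
  have h2 : (0:ℝ) < 1 - t := by linarith
  have d1 : HasDerivAt (fun s : ℝ => 1 + s) 1 t := (hasDerivAt_id t).const_add 1
  have d2 : HasDerivAt (fun s : ℝ => 1 - s) (-1) t := (hasDerivAt_id t).const_sub 1
  have dl1 : HasDerivAt (fun s : ℝ => Real.log (1 + s)) ((1+t)⁻¹ * 1) t :=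
    (Real.hasDerivAt_log h1.ne').comp t d1
  have dl2 : HasDerivAt (fun s : ℝ => Real.log (1 - s)) ((1-t)⁻¹ * (-1)) t :=
    (Real.hasDerivAt_log h2.ne').comp t d2
  have dt1 : HasDerivAt (fun s : ℝ => ((1+s)/2) * Real.log (1+s))
      ((1/2) * Real.log (1+t) + ((1+t)/2) * ((1+t)⁻¹ * 1)) t :=
    (d1.div_const 2).mul dl1
  have dt2 : HasDerivAt (fun s : ℝ => ((1-s)/2) * Real.log (1-s))
      ((-1/2) * Real.log (1-t) + ((1-t)/2) * ((1-t)⁻¹ * (-1))) t :=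
    (d2.div_const 2).mul dl2
  have dp : HasDerivAt (fun s : ℝ =>
      (((1+s)/2) * Real.log (1+s) + ((1-s)/2) * Real.log (1-s)) / Real.log 2)
      (((1/2) * Real.log (1+t) + ((1+t)/2) * ((1+t)⁻¹ * 1)
        + ((-1/2) * Real.log (1-t) + ((1-t)/2) * ((1-t)⁻¹ * (-1)))) / Real.log 2) t :=
    (dt1.add dt2).div_const _
  have heq : (fun s : ℝ =>
      (((1+s)/2) * Real.log (1+s) + ((1-s)/2) * Real.log (1-s)) / Real.log 2) = hbin := by
    funext s
    unfold hbin
    rw [Real.logb, Real.logb]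
    ring
  rw [heq] at dp
  convert dp using 1
  unfold hbin1
  field_simp
  ring

lemma hasDerivAt_hbin1 {t : ℝ} (ht : t ∈ Set.Ioo (-1:ℝ) 1) :
    HasDerivAt hbin1 (hbin2 t) t := by
  obtain ⟨ht1, ht2⟩ := ht
  have h1 : (0:ℝ) < 1 + t := by linarith
  have h2 : (0:ℝ) < 1 - t := by linarith
  have d1 : HasDerivAt (fun s : ℝ => 1 + s) 1 t := (hasDerivAt_id t).const_add 1
  have d2 : HasDerivAt (fun s : ℝ => 1 - s) (-1) t := (hasDerivAt_id t).const_sub 1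
  have dl1 : HasDerivAt (fun s : ℝ => Real.log (1 + s)) ((1+t)⁻¹ * 1) t :=
    (Real.hasDerivAt_log h1.ne').comp t d1
  have dl2 : HasDerivAt (fun s : ℝ => Real.log (1 - s)) ((1-t)⁻¹ * (-1)) t :=
    (Real.hasDerivAt_log h2.ne').comp t d2
  have dp : HasDerivAt hbin1
      (((1+t)⁻¹ * 1 - (1-t)⁻¹ * (-1)) / (2 * Real.log 2)) t :=
    (dl1.sub dl2).div_const _
  convert dp using 1
  unfold hbin2
  have hl := log2_pos
  have hne1 : (1:ℝ) + t ≠ 0 := h1.ne'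
  have hne2 : (1:ℝ) - t ≠ 0 := h2.ne'
  have hne3 : (1:ℝ) - t^2 ≠ 0 := by nlinarith
  field_simp
  ring

lemma sq_lt_one_of_Ioo {a : ℝ} (ha : a ∈ Set.Ioo (-1:ℝ) 1) : a^2 < 1 := by
  nlinarith [ha.1, ha.2]

/-- Second derivative in the second slot. -/
lemma second_deriv_y {a b : ℝ} (ha : a ∈ Set.Ioo (-1:ℝ) 1) (hb : b ∈ Set.Ioo (-1:ℝ) 1) :
    deriv (deriv (fun b' : ℝ => kker a b')) b = a^2 * hbin2 (a*b) - hbin2 b := by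
  have key : ∀ c ∈ Set.Ioo (-1:ℝ) 1,
      deriv (fun b' : ℝ => kker a b') c = a * hbin1 (a*c) - hbin1 c := by
    intro c hc
    have hev : (fun b' : ℝ => kker a b') =ᶠ[nhds c]
        (fun b' : ℝ => 1 + hbin (a*b') - hbin a - hbin b') := by
      filter_upwards [Ioo_mem_nhds hc.1 hc.2] with d hd
      exact kker_eq ha hd
    rw [hev.deriv_eq]
    have dmul : HasDerivAt (fun b' : ℝ => a * b') (a * 1) c :=
      (hasDerivAt_id c).const_mul a
    have dh : HasDerivAt (fun b' : ℝ => hbin (a*b')) (hbin1 (a*c) * (a*1)) c :=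
      (hasDerivAt_hbin (prod_mem_Ioo ha hc)).comp c dmul
    have d0 : HasDerivAt (fun b' : ℝ => 1 + hbin (a*b') - hbin a - hbin b')
        (hbin1 (a*c) * (a*1) - hbin1 c) c :=
      ((dh.const_add 1).sub_const (hbin a)).sub (hasDerivAt_hbin hc)
    rw [d0.deriv]
    ring
  have hev2 : deriv (fun b' : ℝ => kker a b') =ᶠ[nhds b]
      (fun c : ℝ => a * hbin1 (a*c) - hbin1 c) := by
    filter_upwards [Ioo_mem_nhds hb.1 hb.2] with c hc
    exact key c hc
  rw [hev2.deriv_eq]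
  have dmul : HasDerivAt (fun b' : ℝ => a * b') (a * 1) b :=
    (hasDerivAt_id b).const_mul a
  have dh : HasDerivAt (fun c : ℝ => hbin1 (a*c)) (hbin2 (a*b) * (a*1)) b :=
    (hasDerivAt_hbin1 (prod_mem_Ioo ha hb)).comp b dmul
  have d0 : HasDerivAt (fun c : ℝ => a * hbin1 (a*c) - hbin1 c)
      (a * (hbin2 (a*b) * (a*1)) - hbin2 b) b :=
    (dh.const_mul a).sub (hasDerivAt_hbin1 hb)
  rw [d0.deriv]
  ring

/-- The mixed fourth partial derivative `∂⁴k/∂x²∂y²` equals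
`(2/ln 2)(1+3x²y²)/(1-x²y²)³`, and this is bounded by
`(8/ln 2)(1-x²)^{-3/2}(1-y²)^{-3/2}`. -/
theorem kernel_fourth_derivative (x y : ℝ)
    (hx : x ∈ Set.Ioo (0:ℝ) 1) (hy : y ∈ Set.Ioo (0:ℝ) 1) :
    deriv (deriv (fun a : ℝ => deriv (deriv (fun b : ℝ => kker a b)) y)) x
      = (2 / Real.log 2) * (1 + 3*x^2*y^2) / (1 - x^2*y^2)^3 ∧
    (2 / Real.log 2) * (1 + 3*x^2*y^2) / (1 - x^2*y^2)^3
      ≤ (8 / Real.log 2) * (1 - x^2) ^ (-(3:ℝ)/2) * (1 - y^2) ^ (-(3:ℝ)/2) := by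
  have hx1 : x ∈ Set.Ioo (-1:ℝ) 1 := ⟨by linarith [hx.1], hx.2⟩
  have hy1 : y ∈ Set.Ioo (-1:ℝ) 1 := ⟨by linarith [hy.1], hy.2⟩
  have hy2 : y^2 < 1 := sq_lt_one_of_Ioo hy1
  have hy2' : (0:ℝ) ≤ y^2 := sq_nonneg y
  have hl := log2_pos
  constructor
  · -- the derivative computation
    have hG1 : ∀ a ∈ Set.Ioo (-1:ℝ) 1,
        deriv (fun a' : ℝ => a'^2 * hbin2 (a'*y) - hbin2 y) a
          = 2*a / ((1 - a^2*y^2)^2 * Real.log 2) := by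
      intro a ha
      have ha2 : a^2 < 1 := sq_lt_one_of_Ioo ha
      have hden : (0:ℝ) < 1 - a^2*y^2 := by nlinarith [sq_nonneg a]
      have heq : (fun a' : ℝ => a'^2 * hbin2 (a'*y) - hbin2 y)
          = (fun a' : ℝ => a'^2 / ((1 - a'^2*y^2) * Real.log 2) - hbin2 y) := by
        funext a'
        unfold hbin2
        rw [mul_pow]
        ring
      rw [heq]
      have dnum : HasDerivAt (fun a' : ℝ => a'^2) (2*a) a := by
        simpa using hasDerivAt_pow 2 a
      have dden : HasDerivAt (fun a' : ℝ => (1 - a'^2*y^2) * Real.log 2)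
          ((-(2*a)*y^2) * Real.log 2) a := by
        have : HasDerivAt (fun a' : ℝ => 1 - a'^2*y^2) (-(2*a)*y^2) a := by
          have h1 : HasDerivAt (fun a' : ℝ => a'^2*y^2) (2*a*y^2) a := by
            simpa using (hasDerivAt_pow 2 a).mul_const (y^2)
          simpa using h1.const_sub 1
        simpa using this.mul_const (Real.log 2)
      have hdne : (1 - a^2*y^2) * Real.log 2 ≠ 0 := by positivity
      have dd : HasDerivAt (fun a' : ℝ => a'^2 / ((1 - a'^2*y^2) * Real.log 2) - hbin2 y) _ a :=
        (dnum.div dden hdne).sub_const (hbin2 y)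
      rw [dd.deriv]
      field_simp
      ring
    have hF : (fun a : ℝ => deriv (deriv (fun b : ℝ => kker a b)) y) =ᶠ[nhds x]
        (fun a : ℝ => a^2 * hbin2 (a*y) - hbin2 y) := by
      filter_upwards [Ioo_mem_nhds hx1.1 hx1.2] with a ha
      exact second_deriv_y ha hy1
    have hder2 : deriv (fun a : ℝ => deriv (deriv (fun b : ℝ => kker a b)) y) =ᶠ[nhds x]
        (fun a : ℝ => 2*a / ((1 - a^2*y^2)^2 * Real.log 2)) := by
      refine hF.deriv.trans ?_
      filter_upwards [Ioo_mem_nhds hx1.1 hx1.2] with a ha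
      exact hG1 a ha
    rw [hder2.deriv_eq]
    have hx2 : x^2 < 1 := sq_lt_one_of_Ioo hx1
    have hden : (0:ℝ) < 1 - x^2*y^2 := by nlinarith [sq_nonneg x]
    have dnum : HasDerivAt (fun a : ℝ => 2*a) 2 x := by
      simpa using (hasDerivAt_id x).const_mul 2
    have dinner : HasDerivAt (fun a : ℝ => 1 - a^2*y^2) (-(2*x)*y^2) x := by
      have h1 : HasDerivAt (fun a : ℝ => a^2*y^2) (2*x*y^2) x := by
        simpa using (hasDerivAt_pow 2 x).mul_const (y^2)
      simpa using h1.const_sub 1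
    have dden : HasDerivAt (fun a : ℝ => (1 - a^2*y^2)^2 * Real.log 2)
        ((2 * (1 - x^2*y^2) * (-(2*x)*y^2)) * Real.log 2) x := by
      have := dinner.pow 2
      simpa using this.mul_const (Real.log 2)
    have hdne : (1 - x^2*y^2)^2 * Real.log 2 ≠ 0 := by positivity
    have dd : HasDerivAt (fun a : ℝ => 2*a / ((1 - a^2*y^2)^2 * Real.log 2)) _ x :=
      dnum.div dden hdne
    rw [dd.deriv]
    field_simp
    ring
  · -- the inequality
    have hx2 : x^2 < 1 := sq_lt_one_of_Ioo hx1
    set A : ℝ := 1 - x^2 with hA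
    set B : ℝ := 1 - y^2 with hB
    have hApos : (0:ℝ) < A := by rw [hA]; nlinarith
    have hBpos : (0:ℝ) < B := by rw [hB]; nlinarith
    have hAle : A ≤ 1 := by rw [hA]; nlinarith [sq_nonneg x]
    have hBle : B ≤ 1 := by rw [hB]; nlinarith [sq_nonneg y]
    have hABpos : (0:ℝ) < A*B := mul_pos hApos hBpos
    set s : ℝ := Real.sqrt (A*B) with hs
    have hspos : (0:ℝ) < s := Real.sqrt_pos.mpr hABpos
    have hssq : s^2 = A*B := Real.sq_sqrt hABpos.le
    have hsle1 : s ≤ 1 := Real.sqrt_le_one.mpr (by nlinarith)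
    have hsab : s = Real.sqrt A * Real.sqrt B := by
      rw [hs, Real.sqrt_mul hApos.le]
    have hD : 1 - x^2*y^2 = A + B - A*B := by rw [hA, hB]; ring
    have hDges : s ≤ A + B - A*B := by
      nlinarith [sq_nonneg (Real.sqrt A - Real.sqrt B),
        Real.sq_sqrt hApos.le, Real.sq_sqrt hBpos.le, hsab, hssq, hspos, hsle1]
    have hDpos : (0:ℝ) < 1 - x^2*y^2 := by nlinarith [sq_nonneg x, sq_nonneg y]
    -- rewrite the rpow terms
    have hrw : A ^ (-(3:ℝ)/2) * B ^ (-(3:ℝ)/2) = (s^3)⁻¹ := by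
      rw [← Real.mul_rpow hApos.le hBpos.le,
        show (-(3:ℝ)/2) = -((3:ℝ)/2) by ring, Real.rpow_neg hABpos.le,
        show ((3:ℝ)/2) = (1/(2:ℝ)) * ((3:ℕ):ℝ) by norm_num,
        Real.rpow_mul hABpos.le, Real.rpow_natCast, ← Real.sqrt_eq_rpow, ← hs]
    rw [show (8:ℝ) / Real.log 2 * A ^ (-(3:ℝ)/2) * B ^ (-(3:ℝ)/2)
      = 8 / Real.log 2 * (A ^ (-(3:ℝ)/2) * B ^ (-(3:ℝ)/2)) from mul_assoc _ _ _, hrw]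
    have hs3 : s^3 ≤ (1 - x^2*y^2)^3 := by
      rw [hD]; exact pow_le_pow_left₀ hspos.le hDges 3
    have hs3pos : (0:ℝ) < s^3 := by positivity
    calc (2 / Real.log 2) * (1 + 3*x^2*y^2) / (1 - x^2*y^2)^3
        ≤ (2 / Real.log 2) * 4 / (1 - x^2*y^2)^3 := by
          have h14 : (1:ℝ) + 3*x^2*y^2 ≤ 4 := by nlinarith [sq_nonneg (x*y)]
          gcongr
      _ ≤ (2 / Real.log 2) * 4 / s^3 := by gcongr
      _ = (8 / Real.log 2) * (s^3)⁻¹ := by ring
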